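/- For every integer K ≥ 1, the Flaschka–Newell bracket on ℂ^{2K+2} × ℂ* satisfies the Jacobi identity: for all coordinate functions x_a, x_b, x_c taken among s_1, …, s_{2K+2}, λ, one has {x_a, {x_b, x_c}_{FN}}_{FN} + {x_b, {x_c, x_a}_{FN}}_{FN} + {x_c, {x_a, x_b}_{FN}}_{FN} = 0 identically on ℂ^{2K+2} × ℂ*. -/

import Mathlib

noncomputable section

open Matrix Finset

/-- Partial derivative with respect to the Stokes coordinate `s_j`
(0-based index `j`, corresponding to the paper's `s_{j+1}`) of a function
of `(s, λ) ∈ ℂ^{2K+2} × ℂ`. -/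
def pS (K : ℕ) (j : Fin (2*K+2)) (f : (Fin (2*K+2) → ℂ) → ℂ → ℂ)
    (s : Fin (2*K+2) → ℂ) (lam : ℂ) : ℂ :=
  fderiv ℂ (fun t => f t lam) s (Pi.single j 1)

/-- Partial derivative with respect to `λ`. -/
def pL (K : ℕ) (f : (Fin (2*K+2) → ℂ) → ℂ → ℂ)
    (s : Fin (2*K+2) → ℂ) (lam : ℂ) : ℂ :=
  deriv (f s) lam

/-- The structure constant `{s_{j+1}, s_{l+1}}_{FN}` (0-based indices `j < l`):
`δ_{j+1,l} − δ_{j,0} δ_{l,2K+1} λ^{−2} + (−1)^{j+l+1} s_j s_l`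
(which is the paper's `δ_{j,l−1} − δ_{j,1}δ_{l,2K+2} λ^{−2} + (−1)^{j−l+1} s_j s_l`
in 1-based indexing). -/
def cSS (K : ℕ) (j l : Fin (2*K+2)) (s : Fin (2*K+2) → ℂ) (lam : ℂ) : ℂ :=
  (if (j:ℕ)+1 = (l:ℕ) then 1 else 0)
  - (if (j:ℕ) = 0 ∧ (l:ℕ) = 2*K+1 then (lam^2)⁻¹ else 0)
  + (-1:ℂ)^((j:ℕ)+(l:ℕ)+1) * s j * s l

/-- The structure constant `{s_{j+1}, λ}_{FN} = (−1)^{j+1} s_{j+1} λ` (0-based `j`). -/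
def cSL (K : ℕ) (j : Fin (2*K+2)) (s : Fin (2*K+2) → ℂ) (lam : ℂ) : ℂ :=
  (-1:ℂ)^((j:ℕ)+1) * s j * lam

/-- The Flaschka–Newell bracket of two functions of `(s, λ)`:
`{f,g} = Σ_{j<l} {s_j,s_l}·(∂_j f ∂_l g − ∂_l f ∂_j g) + Σ_j {s_j,λ}·(∂_j f ∂_λ g − ∂_λ f ∂_j g)`. -/
def fnBr (K : ℕ) (f g : (Fin (2*K+2) → ℂ) → ℂ → ℂ)
    (s : Fin (2*K+2) → ℂ) (lam : ℂ) : ℂ :=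
  (∑ j : Fin (2*K+2), ∑ l : Fin (2*K+2),
    if (j:ℕ) < (l:ℕ) then
      cSS K j l s lam *
        (pS K j f s lam * pS K l g s lam - pS K l f s lam * pS K j g s lam)
    else 0)
  + ∑ j : Fin (2*K+2),
      cSL K j s lam * (pS K j f s lam * pL K g s lam - pL K f s lam * pS K j g s lam)

/-- Upper-triangular unipotent 2×2 matrix `[[1, a], [0, 1]]`. -/
def Umat (a : ℂ) : Matrix (Fin 2) (Fin 2) ℂ := !![1, a; 0, 1]

/-- Lower-triangular unipotent 2×2 matrix `[[1, 0], [a, 1]]`. -/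
def Lmat (a : ℂ) : Matrix (Fin 2) (Fin 2) ℂ := !![1, 0; a, 1]

/-- The Pauli matrix `σ3`. -/
def sigma3 : Matrix (Fin 2) (Fin 2) ℂ := !![1, 0; 0, -1]

/-- The matrix `σ₊`. -/
def sigmaP : Matrix (Fin 2) (Fin 2) ℂ := !![0, 1; 0, 0]

/-- The matrix `σ₋`. -/
def sigmaM : Matrix (Fin 2) (Fin 2) ℂ := !![0, 0; 1, 0]

/-- The matrix `F = F_K(s, λ) = [[1,s_1],[0,1]]·[[1,0],[s_2,1]] ⋯
[[1,s_{2K+1}],[0,1]]·[[1,0],[s_{2K+2},1]]·diag(λ, λ⁻¹)`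
(here `s` is 0-based: `s i` is the paper's `s_{i+1}`). -/
def Fmat (K : ℕ) (s : Fin (2*K+2) → ℂ) (lam : ℂ) : Matrix (Fin 2) (Fin 2) ℂ :=
  ((List.ofFn fun i : Fin (K+1) =>
      Umat (s ⟨2*(i:ℕ), by have := i.isLt; omega⟩) *
      Lmat (s ⟨2*(i:ℕ)+1, by have := i.isLt; omega⟩)).prod)
    * !![lam, 0; 0, lam⁻¹]

/-- The coordinate functions `s_1, …, s_{2K+2}, λ` on `ℂ^{2K+2} × ℂ*`
(index `i < 2K+2` gives `s_{i+1}`, the last index gives `λ`). -/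
def coordFn (K : ℕ) (i : Fin (2*K+3)) : (Fin (2*K+2) → ℂ) → ℂ → ℂ :=
  if h : (i:ℕ) < 2*K+2 then fun t _ => t ⟨(i:ℕ), h⟩ else fun _ lam => lam


section FNAux

/-- Uniform structure constant on all 2K+3 coordinates (for `a < b`). -/
def CCu (K : ℕ) (a b : Fin (2*K+3)) (s : Fin (2*K+2) → ℂ) (lam : ℂ) : ℂ :=
  (if (a:ℕ)+1 = (b:ℕ) ∧ (b:ℕ) < 2*K+2 then 1 else 0)
  - (if (a:ℕ) = 0 ∧ (b:ℕ) = 2*K+1 then (lam^2)⁻¹ else 0)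
  + (-1:ℂ)^((a:ℕ)+(b:ℕ)+1) * coordFn K a s lam * coordFn K b s lam

/-- Antisymmetrized structure constant. -/
def CC (K : ℕ) (a b : Fin (2*K+3)) (s : Fin (2*K+2) → ℂ) (lam : ℂ) : ℂ :=
  if (a:ℕ) < (b:ℕ) then CCu K a b s lam
  else if (b:ℕ) < (a:ℕ) then -CCu K b a s lam else 0

variable {K : ℕ}

lemma coordFn_lt (a : Fin (2*K+3)) (h : (a:ℕ) < 2*K+2) :
    coordFn K a = fun t _ => t ⟨(a:ℕ), h⟩ := by
  unfold coordFn; rw [dif_pos h]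

lemma coordFn_last (a : Fin (2*K+3)) (h : ¬ (a:ℕ) < 2*K+2) :
    coordFn K a = fun _ lam => lam := by
  unfold coordFn; rw [dif_neg h]

lemma coordFn_last_apply (h : 2*K+2 < 2*K+3) (s : Fin (2*K+2) → ℂ) (lam : ℂ) :
    coordFn K ⟨2*K+2, h⟩ s lam = lam := by
  rw [coordFn_last _ (by simp)]

lemma sum_delta {n : ℕ} (m : ℕ) (g : Fin n → ℂ) :
    (∑ j : Fin n, if m = (j:ℕ) then g j else 0)
      = if h : m < n then g ⟨m, h⟩ else 0 := by
  split_ifs with h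
  · rw [Finset.sum_eq_single (⟨m, h⟩ : Fin n)]
    · simp
    · intro j _ hj
      exact if_neg fun hm => hj (Fin.ext hm.symm)
    · intro hj; exact absurd (Finset.mem_univ _) hj
  · exact Finset.sum_eq_zero fun j _ => if_neg (by have := j.isLt; omega)

lemma sum_ite_const {n : ℕ} (c : Prop) [Decidable c] (U : Fin n → ℂ) :
    (∑ l : Fin n, if c then U l else 0) = if c then ∑ l : Fin n, U l else 0 := by
  split_ifs <;> simp

lemma pS_coord (j : Fin (2*K+2)) (a : Fin (2*K+3)) (s : Fin (2*K+2) → ℂ) (lam : ℂ) :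
    pS K j (coordFn K a) s lam = if (a:ℕ) = (j:ℕ) then 1 else 0 := by
  by_cases h : (a:ℕ) < 2*K+2
  · rw [coordFn_lt a h]
    unfold pS
    show (fderiv ℂ (fun t : Fin (2*K+2) → ℂ => t ⟨(a:ℕ), h⟩) s) (Pi.single j 1) = _
    rw [(hasFDerivAt_apply (𝕜 := ℂ) (⟨(a:ℕ), h⟩ : Fin (2*K+2)) s).fderiv]
    simp [ContinuousLinearMap.proj_apply, Pi.single_apply, Fin.ext_iff, eq_comm]
  · rw [coordFn_last a h]
    unfold pS
    simp only [fderiv_const]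
    have : (a:ℕ) ≠ (j:ℕ) := by have := j.isLt; omega
    simp [this]

lemma pL_coord (a : Fin (2*K+3)) (s : Fin (2*K+2) → ℂ) (lam : ℂ) :
    pL K (coordFn K a) s lam = if (a:ℕ) = 2*K+2 then 1 else 0 := by
  by_cases h : (a:ℕ) < 2*K+2
  · rw [coordFn_lt a h]
    unfold pL
    rw [if_neg (by omega)]
    simp
  · rw [coordFn_last a h]
    unfold pL
    rw [if_pos (by have := a.isLt; omega)]
    exact deriv_id lam

lemma hasF (a : Fin (2*K+3)) (s : Fin (2*K+2) → ℂ) (lam : ℂ) :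
    HasFDerivAt (fun t => coordFn K a t lam)
      (if h : (a:ℕ) < 2*K+2 then
        (ContinuousLinearMap.proj ⟨(a:ℕ), h⟩ : (Fin (2*K+2) → ℂ) →L[ℂ] ℂ) else 0) s := by
  by_cases h : (a:ℕ) < 2*K+2
  · rw [dif_pos h, coordFn_lt a h]
    exact hasFDerivAt_apply (𝕜 := ℂ) (⟨(a:ℕ), h⟩ : Fin (2*K+2)) s
  · rw [dif_neg h, coordFn_last a h]
    exact hasFDerivAt_const lam s

lemma hasF_apply (a : Fin (2*K+3)) (j : Fin (2*K+2)) :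
    (if h : (a:ℕ) < 2*K+2 then
        (ContinuousLinearMap.proj ⟨(a:ℕ), h⟩ : (Fin (2*K+2) → ℂ) →L[ℂ] ℂ) else 0)
      (Pi.single j 1) = if (a:ℕ) = (j:ℕ) then 1 else 0 := by
  by_cases h : (a:ℕ) < 2*K+2
  · rw [dif_pos h]
    simp [ContinuousLinearMap.proj_apply, Pi.single_apply, Fin.ext_iff, eq_comm]
  · rw [dif_neg h]
    have : (a:ℕ) ≠ (j:ℕ) := by have := j.isLt; omega
    simp [this]

lemma hasD (a : Fin (2*K+3)) (s : Fin (2*K+2) → ℂ) (lam : ℂ) :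
    HasDerivAt (fun l => coordFn K a s l) (if (a:ℕ) = 2*K+2 then 1 else 0) lam := by
  by_cases h : (a:ℕ) < 2*K+2
  · rw [if_neg (by omega), coordFn_lt a h]
    exact hasDerivAt_const lam _
  · rw [if_pos (by have := a.isLt; omega), coordFn_last a h]
    exact hasDerivAt_id lam

lemma pS_CCu (m : Fin (2*K+2)) (a b : Fin (2*K+3)) (s : Fin (2*K+2) → ℂ) (lam : ℂ) :
    pS K m (CCu K a b) s lam
      = (-1:ℂ)^((a:ℕ)+(b:ℕ)+1) *
        ((if (a:ℕ) = (m:ℕ) then 1 else 0) * coordFn K b s lam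
          + coordFn K a s lam * (if (b:ℕ) = (m:ℕ) then 1 else 0)) := by
  have h : HasFDerivAt (fun t => CCu K a b t lam)
      ((0 : (Fin (2*K+2) → ℂ) →L[ℂ] ℂ) - 0 +
        (((-1:ℂ)^((a:ℕ)+(b:ℕ)+1) * coordFn K a s lam) •
            (if h : (b:ℕ) < 2*K+2 then
              (ContinuousLinearMap.proj ⟨(b:ℕ), h⟩ : (Fin (2*K+2) → ℂ) →L[ℂ] ℂ) else 0)
          + coordFn K b s lam •
            ((-1:ℂ)^((a:ℕ)+(b:ℕ)+1) •
              (if h : (a:ℕ) < 2*K+2 then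
                (ContinuousLinearMap.proj ⟨(a:ℕ), h⟩ : (Fin (2*K+2) → ℂ) →L[ℂ] ℂ) else 0)))) s := by
    exact ((hasFDerivAt_const (if (a:ℕ)+1 = (b:ℕ) ∧ (b:ℕ) < 2*K+2 then (1:ℂ) else 0) s).sub
      (hasFDerivAt_const (if (a:ℕ) = 0 ∧ (b:ℕ) = 2*K+1 then (lam^2)⁻¹ else 0) s)).add
      (((hasF a s lam).const_mul ((-1:ℂ)^((a:ℕ)+(b:ℕ)+1))).mul (hasF b s lam))
  unfold pS
  rw [h.fderiv]
  simp only [ContinuousLinearMap.add_apply, ContinuousLinearMap.sub_apply,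
    ContinuousLinearMap.zero_apply, ContinuousLinearMap.smul_apply, hasF_apply,
    smul_eq_mul]
  ring

lemma pL_CCu (a b : Fin (2*K+3)) (s : Fin (2*K+2) → ℂ) {lam : ℂ} (hlam : lam ≠ 0) :
    pL K (CCu K a b) s lam
      = (if (a:ℕ) = 0 ∧ (b:ℕ) = 2*K+1 then 2*(lam^3)⁻¹ else 0)
        + (-1:ℂ)^((a:ℕ)+(b:ℕ)+1) *
          ((if (a:ℕ) = 2*K+2 then 1 else 0) * coordFn K b s lam
            + coordFn K a s lam * (if (b:ℕ) = 2*K+2 then 1 else 0)) := by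
  have hinv : HasDerivAt (fun l : ℂ => (if (a:ℕ) = 0 ∧ (b:ℕ) = 2*K+1 then (l^2)⁻¹ else 0))
      (if (a:ℕ) = 0 ∧ (b:ℕ) = 2*K+1 then -2*(lam^3)⁻¹ else 0) lam := by
    split_ifs
    · have h := (hasDerivAt_pow 2 lam).inv (pow_ne_zero 2 hlam)
      refine h.congr_deriv ?_
      rw [show (2:ℕ)-1 = 1 from rfl]
      field_simp
      ring
    · exact hasDerivAt_const lam 0
  have h : HasDerivAt (fun l => CCu K a b s l)
      ((0 : ℂ) - (if (a:ℕ) = 0 ∧ (b:ℕ) = 2*K+1 then -2*(lam^3)⁻¹ else 0)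
        + (((-1:ℂ)^((a:ℕ)+(b:ℕ)+1) * (if (a:ℕ) = 2*K+2 then 1 else 0)) * coordFn K b s lam
            + ((-1:ℂ)^((a:ℕ)+(b:ℕ)+1) * coordFn K a s lam) *
                (if (b:ℕ) = 2*K+2 then 1 else 0))) lam := by
    exact ((hasDerivAt_const lam
        (if (a:ℕ)+1 = (b:ℕ) ∧ (b:ℕ) < 2*K+2 then (1:ℂ) else 0)).sub hinv).add
      (((hasD a s lam).const_mul ((-1:ℂ)^((a:ℕ)+(b:ℕ)+1))).mul (hasD b s lam))
  unfold pL
  rw [h.deriv]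
  split_ifs <;> ring

lemma CCu_val (a b : Fin (2*K+3)) (ha : (a:ℕ) < 2*K+2) (hb : (b:ℕ) < 2*K+2)
    (s : Fin (2*K+2) → ℂ) (lam : ℂ) :
    CCu K a b s lam = cSS K ⟨(a:ℕ), ha⟩ ⟨(b:ℕ), hb⟩ s lam := by
  unfold CCu cSS
  rw [coordFn_lt a ha, coordFn_lt b hb]
  simp [hb]

lemma CCu_lastR (a b : Fin (2*K+3)) (ha : (a:ℕ) < 2*K+2) (hb : (b:ℕ) = 2*K+2)
    (s : Fin (2*K+2) → ℂ) (lam : ℂ) :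
    CCu K a b s lam = cSL K ⟨(a:ℕ), ha⟩ s lam := by
  unfold CCu cSL
  rw [coordFn_lt a ha, coordFn_last b (by omega)]
  rw [if_neg (by omega), if_neg (by omega), hb]
  rw [show (a:ℕ) + (2*K+2) + 1 = ((a:ℕ)+1) + 2*(K+1) from by ring, pow_add, pow_mul]
  norm_num

lemma fnBr_coord_coord (a b : Fin (2*K+3)) :
    fnBr K (coordFn K a) (coordFn K b) = CC K a b := by
  funext s lam
  unfold fnBr
  simp only [pS_coord, pL_coord]
  have e1 : ∀ j l : Fin (2*K+2),
      (if (j:ℕ) < (l:ℕ) then cSS K j l s lam *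
          ((if (a:ℕ) = (j:ℕ) then (1:ℂ) else 0) * (if (b:ℕ) = (l:ℕ) then (1:ℂ) else 0)
            - (if (a:ℕ) = (l:ℕ) then (1:ℂ) else 0) * (if (b:ℕ) = (j:ℕ) then (1:ℂ) else 0))
        else 0)
        = ((if (a:ℕ) = (j:ℕ) then (if (b:ℕ) = (l:ℕ) then
              (if (j:ℕ) < (l:ℕ) then cSS K j l s lam else 0) else 0) else 0)
          - (if (b:ℕ) = (j:ℕ) then (if (a:ℕ) = (l:ℕ) then
              (if (j:ℕ) < (l:ℕ) then cSS K j l s lam else 0) else 0) else 0)) := by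
    intro j l; split_ifs <;> ring
  have e2 : ∀ j : Fin (2*K+2),
      (cSL K j s lam * ((if (a:ℕ) = (j:ℕ) then (1:ℂ) else 0) *
          (if (b:ℕ) = 2*K+2 then (1:ℂ) else 0)
        - (if (a:ℕ) = 2*K+2 then (1:ℂ) else 0) * (if (b:ℕ) = (j:ℕ) then (1:ℂ) else 0)))
        = ((if (a:ℕ) = (j:ℕ) then (if (b:ℕ) = 2*K+2 then cSL K j s lam else 0) else 0)
          - (if (b:ℕ) = (j:ℕ) then (if (a:ℕ) = 2*K+2 then cSL K j s lam else 0) else 0)) := by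
    intro j; split_ifs <;> ring
  rw [Finset.sum_congr rfl fun j _ => Finset.sum_congr rfl fun l _ => e1 j l,
      Finset.sum_congr rfl fun j _ => e2 j]
  simp only [Finset.sum_sub_distrib]
  have collapse : ∀ (p q : ℕ) (T : Fin (2*K+2) → Fin (2*K+2) → ℂ),
      (∑ j : Fin (2*K+2), ∑ l : Fin (2*K+2),
        if p = (j:ℕ) then (if q = (l:ℕ) then T j l else 0) else 0)
      = if hp : p < 2*K+2 then (if hq : q < 2*K+2 then T ⟨p, hp⟩ ⟨q, hq⟩ else 0) else 0 := by
    intro p q T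
    have step : ∀ j : Fin (2*K+2),
        (∑ l : Fin (2*K+2), if p = (j:ℕ) then (if q = (l:ℕ) then T j l else 0) else 0)
          = if p = (j:ℕ) then (if h : q < 2*K+2 then T j ⟨q, h⟩ else 0) else 0 := by
      intro j
      rw [sum_ite_const (p = (j:ℕ)) (fun l => if q = (l:ℕ) then T j l else 0), sum_delta]
    rw [Finset.sum_congr rfl fun j _ => step j, sum_delta]
  rw [collapse, collapse, sum_delta, sum_delta]
  simp only [Fin.val_mk]
  unfold CC
  split_ifs <;>
    first
      | rfl
      | (exfalso; omega)
      | (rw [CCu_val a b (by omega) (by omega) s lam]; ring)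
      | (rw [CCu_val b a (by omega) (by omega) s lam]; ring)
      | (rw [CCu_lastR a b (by omega) (by omega) s lam]; ring)
      | (rw [CCu_lastR b a (by omega) (by omega) s lam]; ring)
      | ring

lemma CC_pos {a b : Fin (2*K+3)} (h : (a:ℕ) < (b:ℕ)) (s : Fin (2*K+2) → ℂ) (lam : ℂ) :
    CC K a b s lam = CCu K a b s lam := by
  unfold CC; rw [if_pos h]

lemma CC_neg {a b : Fin (2*K+3)} (h : (b:ℕ) < (a:ℕ)) (s : Fin (2*K+2) → ℂ) (lam : ℂ) :
    CC K a b s lam = -CCu K b a s lam := by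
  unfold CC; rw [if_neg (by omega), if_pos h]

lemma CC_diag {a b : Fin (2*K+3)} (h : (a:ℕ) = (b:ℕ)) (s : Fin (2*K+2) → ℂ) (lam : ℂ) :
    CC K a b s lam = 0 := by
  unfold CC; rw [if_neg (by omega), if_neg (by omega)]

lemma fnBr_coord_left (a : Fin (2*K+3)) (g : (Fin (2*K+2) → ℂ) → ℂ → ℂ)
    (s : Fin (2*K+2) → ℂ) (lam : ℂ) :
    fnBr K (coordFn K a) g s lam
      = (∑ d : Fin (2*K+2), CC K a ⟨(d:ℕ), by omega⟩ s lam * pS K d g s lam)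
        + CC K a ⟨2*K+2, by omega⟩ s lam * pL K g s lam := by
  unfold fnBr
  simp only [pS_coord, pL_coord]
  have e1 : ∀ j l : Fin (2*K+2),
      (if (j:ℕ) < (l:ℕ) then cSS K j l s lam *
          ((if (a:ℕ) = (j:ℕ) then (1:ℂ) else 0) * pS K l g s lam
            - (if (a:ℕ) = (l:ℕ) then (1:ℂ) else 0) * pS K j g s lam) else 0)
        = ((if (a:ℕ) = (j:ℕ) then
              (if (j:ℕ) < (l:ℕ) then cSS K j l s lam * pS K l g s lam else 0) else 0)
          - (if (a:ℕ) = (l:ℕ) then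
              (if (j:ℕ) < (l:ℕ) then cSS K j l s lam * pS K j g s lam else 0) else 0)) := by
    intro j l; split_ifs <;> ring
  have e2 : ∀ j : Fin (2*K+2),
      (cSL K j s lam * ((if (a:ℕ) = (j:ℕ) then (1:ℂ) else 0) * pL K g s lam
        - (if (a:ℕ) = 2*K+2 then (1:ℂ) else 0) * pS K j g s lam))
        = ((if (a:ℕ) = (j:ℕ) then cSL K j s lam * pL K g s lam else 0)
          - (if (a:ℕ) = 2*K+2 then cSL K j s lam * pS K j g s lam else 0)) := by
    intro j; split_ifs <;> ring
  rw [Finset.sum_congr rfl fun j _ => Finset.sum_congr rfl fun l _ => e1 j l,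
      Finset.sum_congr rfl fun j _ => e2 j]
  simp only [Finset.sum_sub_distrib]
  have hA1 : (∑ j : Fin (2*K+2), ∑ l : Fin (2*K+2),
        if (a:ℕ) = (j:ℕ) then
          (if (j:ℕ) < (l:ℕ) then cSS K j l s lam * pS K l g s lam else 0) else 0)
      = (if h : (a:ℕ) < 2*K+2 then
          ∑ l : Fin (2*K+2), (if (((⟨(a:ℕ), h⟩ : Fin (2*K+2))):ℕ) < (l:ℕ) then
            cSS K ⟨(a:ℕ), h⟩ l s lam * pS K l g s lam else 0) else 0) := by
    simp only [sum_ite_const]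
    rw [sum_delta]
  have hA2 : (∑ j : Fin (2*K+2), ∑ l : Fin (2*K+2),
        if (a:ℕ) = (l:ℕ) then
          (if (j:ℕ) < (l:ℕ) then cSS K j l s lam * pS K j g s lam else 0) else 0)
      = (if h : (a:ℕ) < 2*K+2 then
          ∑ j : Fin (2*K+2), (if (j:ℕ) < (((⟨(a:ℕ), h⟩ : Fin (2*K+2))):ℕ) then
            cSS K j ⟨(a:ℕ), h⟩ s lam * pS K j g s lam else 0) else 0) := by
    rw [Finset.sum_comm]
    simp only [sum_ite_const]
    rw [sum_delta]
  have hB1 : (∑ j : Fin (2*K+2), if (a:ℕ) = (j:ℕ) then cSL K j s lam * pL K g s lam else 0)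
      = (if h : (a:ℕ) < 2*K+2 then cSL K ⟨(a:ℕ), h⟩ s lam * pL K g s lam else 0) := by
    rw [sum_delta]
  have hB2 : (∑ j : Fin (2*K+2), if (a:ℕ) = 2*K+2 then cSL K j s lam * pS K j g s lam else 0)
      = (if (a:ℕ) = 2*K+2 then ∑ j : Fin (2*K+2), cSL K j s lam * pS K j g s lam else 0) :=
    sum_ite_const _ _
  rw [hA1, hA2, hB1, hB2]
  by_cases ha : (a:ℕ) < 2*K+2
  · rw [dif_pos ha, dif_pos ha, dif_pos ha, if_neg (by omega)]
    have ed : ∀ d : Fin (2*K+2),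
        CC K a ⟨(d:ℕ), by omega⟩ s lam * pS K d g s lam
          = (if (a:ℕ) < (d:ℕ) then cSS K ⟨(a:ℕ), ha⟩ d s lam * pS K d g s lam else 0)
            - (if (d:ℕ) < (a:ℕ) then cSS K d ⟨(a:ℕ), ha⟩ s lam * pS K d g s lam else 0) := by
      intro d
      rcases Nat.lt_trichotomy (a:ℕ) (d:ℕ) with hh | hh | hh
      · rw [CC_pos (by simpa using hh), CCu_val a ⟨(d:ℕ), by omega⟩ ha (by simpa using d.isLt)]
        simp only [Fin.eta]
        rw [if_pos hh, if_neg (by omega)]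
        ring
      · rw [CC_diag (by simpa using hh), if_neg (by omega), if_neg (by omega)]
        ring
      · rw [CC_neg (by simpa using hh), CCu_val ⟨(d:ℕ), by omega⟩ a (by simpa using d.isLt) ha]
        simp only [Fin.eta]
        rw [if_neg (by omega), if_pos hh]
        ring
    rw [Finset.sum_congr rfl fun d _ => ed d, Finset.sum_sub_distrib,
        CC_pos (a := a) (b := ⟨2*K+2, by omega⟩) (by simpa using ha) s lam,
        CCu_lastR a ⟨2*K+2, by omega⟩ ha (by simp)]
    simp only [Fin.val_mk]
    ring
  · rw [dif_neg ha, dif_neg ha, dif_neg ha, if_pos (by have := a.isLt; omega)]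
    have ha2 : (a:ℕ) = 2*K+2 := by have := a.isLt; omega
    have ed : ∀ d : Fin (2*K+2),
        CC K a ⟨(d:ℕ), by omega⟩ s lam * pS K d g s lam
          = -(cSL K d s lam * pS K d g s lam) := by
      intro d
      rw [CC_neg (by simpa using (by omega : (d:ℕ) < (a:ℕ))),
          CCu_lastR ⟨(d:ℕ), by omega⟩ a (by simpa using d.isLt) ha2]
      simp only [Fin.eta]
      ring
    rw [Finset.sum_congr rfl fun d _ => ed d,
        CC_diag (a := a) (b := ⟨2*K+2, by omega⟩) (by simpa using ha2) s lam]
    simp only [Finset.sum_neg_distrib]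
    ring

lemma pS_neg (j : Fin (2*K+2)) (g : (Fin (2*K+2) → ℂ) → ℂ → ℂ)
    (s : Fin (2*K+2) → ℂ) (lam : ℂ) :
    pS K j (fun t l => -(g t l)) s lam = -(pS K j g s lam) := by
  unfold pS
  show fderiv ℂ (-(fun t => g t lam)) s _ = _
  rw [fderiv_neg]
  rfl

lemma pL_neg (g : (Fin (2*K+2) → ℂ) → ℂ → ℂ) (s : Fin (2*K+2) → ℂ) (lam : ℂ) :
    pL K (fun t l => -(g t l)) s lam = -(pL K g s lam) := by
  unfold pL
  exact deriv.neg

lemma pS_zero (j : Fin (2*K+2)) (s : Fin (2*K+2) → ℂ) (lam : ℂ) :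
    pS K j (fun _ _ => (0:ℂ)) s lam = 0 := by
  unfold pS
  simp

lemma pL_zero (s : Fin (2*K+2) → ℂ) (lam : ℂ) :
    pL K (fun _ _ => (0:ℂ)) s lam = 0 := by
  unfold pL
  simp

lemma fnBr_neg_right (f g : (Fin (2*K+2) → ℂ) → ℂ → ℂ) (s : Fin (2*K+2) → ℂ) (lam : ℂ) :
    fnBr K f (fun t l => -(g t l)) s lam = -(fnBr K f g s lam) := by
  unfold fnBr
  simp only [pS_neg, pL_neg]
  rw [neg_add, ← Finset.sum_neg_distrib, ← Finset.sum_neg_distrib]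
  congr 1
  · exact Finset.sum_congr rfl fun j _ => by
      rw [← Finset.sum_neg_distrib]
      exact Finset.sum_congr rfl fun l _ => by split_ifs <;> ring
  · exact Finset.sum_congr rfl fun j _ => by ring

lemma fnBr_zero_right (f : (Fin (2*K+2) → ℂ) → ℂ → ℂ) (s : Fin (2*K+2) → ℂ) (lam : ℂ) :
    fnBr K f (fun _ _ => (0:ℂ)) s lam = 0 := by
  unfold fnBr
  simp only [pS_zero, pL_zero]
  simp

lemma fnBr_coord_CCu (a b c : Fin (2*K+3)) (s : Fin (2*K+2) → ℂ) {lam : ℂ} (hlam : lam ≠ 0) :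
    fnBr K (coordFn K a) (CCu K b c) s lam
      = (-1:ℂ)^((b:ℕ)+(c:ℕ)+1) *
          (CC K a b s lam * coordFn K c s lam + coordFn K b s lam * CC K a c s lam)
        + (if (b:ℕ) = 0 ∧ (c:ℕ) = 2*K+1 then
            2*(lam^3)⁻¹ * CC K a ⟨2*K+2, by omega⟩ s lam else 0) := by
  rw [fnBr_coord_left]
  simp only [pS_CCu, pL_CCu b c s hlam]
  have e1 : ∀ d : Fin (2*K+2),
      CC K a ⟨(d:ℕ), by omega⟩ s lam *
        ((-1:ℂ)^((b:ℕ)+(c:ℕ)+1) *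
          ((if (b:ℕ) = (d:ℕ) then (1:ℂ) else 0) * coordFn K c s lam
            + coordFn K b s lam * (if (c:ℕ) = (d:ℕ) then (1:ℂ) else 0)))
        = ((if (b:ℕ) = (d:ℕ) then
              (-1:ℂ)^((b:ℕ)+(c:ℕ)+1) * CC K a ⟨(d:ℕ), by omega⟩ s lam * coordFn K c s lam
            else 0)
          + (if (c:ℕ) = (d:ℕ) then
              (-1:ℂ)^((b:ℕ)+(c:ℕ)+1) * coordFn K b s lam * CC K a ⟨(d:ℕ), by omega⟩ s lam
            else 0)) := by
    intro d; split_ifs <;> ring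
  rw [Finset.sum_congr rfl fun d _ => e1 d, Finset.sum_add_distrib, sum_delta, sum_delta]
  simp only [Fin.val_mk, Fin.eta]
  by_cases hb : (b:ℕ) < 2*K+2
  · rw [dif_pos hb, if_neg (by omega : ¬ (b:ℕ) = 2*K+2)]
    by_cases hc : (c:ℕ) < 2*K+2
    · rw [dif_pos hc, if_neg (by omega : ¬ (c:ℕ) = 2*K+2)]
      split_ifs <;> ring
    · have hc2 : (c:ℕ) = 2*K+2 := by have := c.isLt; omega
      rw [dif_neg hc, if_pos hc2, if_neg (by omega : ¬ ((b:ℕ) = 0 ∧ (c:ℕ) = 2*K+1)),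
          if_neg (by omega : ¬ ((b:ℕ) = 0 ∧ (c:ℕ) = 2*K+1)),
          show (⟨2*K+2, by omega⟩ : Fin (2*K+3)) = c from Fin.ext (by simp [hc2])]
      ring
  · have hb2 : (b:ℕ) = 2*K+2 := by have := b.isLt; omega
    rw [dif_neg hb, if_pos hb2, if_neg (by omega : ¬ ((b:ℕ) = 0 ∧ (c:ℕ) = 2*K+1)),
        if_neg (by omega : ¬ ((b:ℕ) = 0 ∧ (c:ℕ) = 2*K+1)),
        show (⟨2*K+2, by omega⟩ : Fin (2*K+3)) = b from Fin.ext (by simp [hb2])]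
    by_cases hc : (c:ℕ) < 2*K+2
    · rw [dif_pos hc, if_neg (by omega : ¬ (c:ℕ) = 2*K+2)]
      ring
    · have hc2 : (c:ℕ) = 2*K+2 := by have := c.isLt; omega
      rw [dif_neg hc, if_pos hc2, show c = b from Fin.ext (by omega)]
      ring

lemma negpow (n : ℕ) : (-1:ℂ)^n = if n % 2 = 0 then 1 else -1 := by
  rcases Nat.even_or_odd n with h | h
  · rw [h.neg_one_pow, if_pos (Nat.even_iff.mp h)]
  · have h2 := Nat.odd_iff.mp h
    rw [h.neg_one_pow, if_neg (by omega)]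

lemma negpow_shift (z : ℕ) : (-1:ℂ)^(z + (2*K+2) + 1) = (-1:ℂ)^(z+1) := by
  rw [show z + (2*K+2) + 1 = (z+1) + 2*(K+1) from by ring, pow_add, pow_mul]
  norm_num

set_option maxHeartbeats 1000000 in
lemma key (a b c : Fin (2*K+3)) (hab : (a:ℕ) < (b:ℕ)) (hbc : (b:ℕ) < (c:ℕ))
    (s : Fin (2*K+2) → ℂ) {lam : ℂ} (hlam : lam ≠ 0) :
    fnBr K (coordFn K a) (CCu K b c) s lam
      - fnBr K (coordFn K b) (CCu K a c) s lam
      + fnBr K (coordFn K c) (CCu K a b) s lam = 0 := by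
  have hc3 := c.isLt
  rw [fnBr_coord_CCu a b c s hlam, fnBr_coord_CCu b a c s hlam, fnBr_coord_CCu c a b s hlam,
      if_neg (show ¬((b:ℕ) = 0 ∧ (c:ℕ) = 2*K+1) from by omega)]
  rw [CC_pos hab, CC_pos (show (a:ℕ) < (c:ℕ) from by omega) (s := s) (lam := lam),
      CC_pos hbc, CC_neg hab, CC_neg (show (a:ℕ) < (c:ℕ) from by omega) (s := s) (lam := lam),
      CC_neg hbc,
      CC_pos (a := b) (b := (⟨2*K+2, by omega⟩ : Fin (2*K+3)))
        (show (b:ℕ) < ((⟨2*K+2, by omega⟩ : Fin (2*K+3)):ℕ) from by simp; omega) s lam]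
  rcases Nat.lt_or_ge (c:ℕ) (2*K+2) with hcL | hcL
  · rw [CC_pos (a := c) (b := (⟨2*K+2, by omega⟩ : Fin (2*K+3)))
        (show (c:ℕ) < ((⟨2*K+2, by omega⟩ : Fin (2*K+3)):ℕ) from by simp; omega) s lam]
    simp only [CCu, Fin.val_mk, coordFn_last_apply, negpow_shift]
    simp only [
        eq_false (show ¬((a:ℕ)+1 = (c:ℕ) ∧ (c:ℕ) < 2*K+2) from by omega),
        eq_false (show ¬((b:ℕ) = 0 ∧ (c:ℕ) = 2*K+1) from by omega),
        eq_false (show ¬((b:ℕ)+1 = 2*K+2 ∧ 2*K+2 < 2*K+2) from by omega),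
        eq_false (show ¬((b:ℕ) = 0 ∧ 2*K+2 = 2*K+1) from by omega),
        eq_false (show ¬((c:ℕ)+1 = 2*K+2 ∧ 2*K+2 < 2*K+2) from by omega),
        eq_false (show ¬((c:ℕ) = 0 ∧ 2*K+2 = 2*K+1) from by omega),
        eq_false (show ¬((a:ℕ) = 0 ∧ (b:ℕ) = 2*K+1) from by omega),
        if_false]
    rcases Nat.mod_two_eq_zero_or_one (a:ℕ) with ha | ha <;>
      rcases Nat.mod_two_eq_zero_or_one (b:ℕ) with hb | hb <;>
      rcases Nat.mod_two_eq_zero_or_one (c:ℕ) with hc | hc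
    · -- parity (0,0,0)
      have eab : (-1:ℂ)^((a:ℕ)+(b:ℕ)+1) = (-1) := by rw [negpow, if_neg (by omega)]
      have eac : (-1:ℂ)^((a:ℕ)+(c:ℕ)+1) = (-1) := by rw [negpow, if_neg (by omega)]
      have ebc : (-1:ℂ)^((b:ℕ)+(c:ℕ)+1) = (-1) := by rw [negpow, if_neg (by omega)]
      have eb1 : (-1:ℂ)^((b:ℕ)+1) = (-1) := by rw [negpow, if_neg (by omega)]
      have ec1 : (-1:ℂ)^((c:ℕ)+1) = (-1) := by rw [negpow, if_neg (by omega)]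
      simp only [eab, eac, ebc, eb1, ec1]
      split_ifs <;> first | (exfalso; omega) | (field_simp; ring)
    · -- parity (0,0,1)
      have eab : (-1:ℂ)^((a:ℕ)+(b:ℕ)+1) = (-1) := by rw [negpow, if_neg (by omega)]
      have eac : (-1:ℂ)^((a:ℕ)+(c:ℕ)+1) = 1 := by rw [negpow, if_pos (by omega)]
      have ebc : (-1:ℂ)^((b:ℕ)+(c:ℕ)+1) = 1 := by rw [negpow, if_pos (by omega)]
      have eb1 : (-1:ℂ)^((b:ℕ)+1) = (-1) := by rw [negpow, if_neg (by omega)]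
      have ec1 : (-1:ℂ)^((c:ℕ)+1) = 1 := by rw [negpow, if_pos (by omega)]
      simp only [eab, eac, ebc, eb1, ec1]
      split_ifs <;> first | (exfalso; omega) | (field_simp; ring)
    · -- parity (0,1,0)
      have eab : (-1:ℂ)^((a:ℕ)+(b:ℕ)+1) = 1 := by rw [negpow, if_pos (by omega)]
      have eac : (-1:ℂ)^((a:ℕ)+(c:ℕ)+1) = (-1) := by rw [negpow, if_neg (by omega)]
      have ebc : (-1:ℂ)^((b:ℕ)+(c:ℕ)+1) = 1 := by rw [negpow, if_pos (by omega)]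
      have eb1 : (-1:ℂ)^((b:ℕ)+1) = 1 := by rw [negpow, if_pos (by omega)]
      have ec1 : (-1:ℂ)^((c:ℕ)+1) = (-1) := by rw [negpow, if_neg (by omega)]
      simp only [eab, eac, ebc, eb1, ec1]
      split_ifs <;> first | (exfalso; omega) | (field_simp; ring)
    · -- parity (0,1,1)
      have eab : (-1:ℂ)^((a:ℕ)+(b:ℕ)+1) = 1 := by rw [negpow, if_pos (by omega)]
      have eac : (-1:ℂ)^((a:ℕ)+(c:ℕ)+1) = 1 := by rw [negpow, if_pos (by omega)]
      have ebc : (-1:ℂ)^((b:ℕ)+(c:ℕ)+1) = (-1) := by rw [negpow, if_neg (by omega)]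
      have eb1 : (-1:ℂ)^((b:ℕ)+1) = 1 := by rw [negpow, if_pos (by omega)]
      have ec1 : (-1:ℂ)^((c:ℕ)+1) = 1 := by rw [negpow, if_pos (by omega)]
      simp only [eab, eac, ebc, eb1, ec1]
      split_ifs <;> first | (exfalso; omega) | (field_simp; ring)
    · -- parity (1,0,0)
      have eab : (-1:ℂ)^((a:ℕ)+(b:ℕ)+1) = 1 := by rw [negpow, if_pos (by omega)]
      have eac : (-1:ℂ)^((a:ℕ)+(c:ℕ)+1) = 1 := by rw [negpow, if_pos (by omega)]
      have ebc : (-1:ℂ)^((b:ℕ)+(c:ℕ)+1) = (-1) := by rw [negpow, if_neg (by omega)]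
      have eb1 : (-1:ℂ)^((b:ℕ)+1) = (-1) := by rw [negpow, if_neg (by omega)]
      have ec1 : (-1:ℂ)^((c:ℕ)+1) = (-1) := by rw [negpow, if_neg (by omega)]
      simp only [eab, eac, ebc, eb1, ec1]
      split_ifs <;> first | (exfalso; omega) | (field_simp; ring)
    · -- parity (1,0,1)
      have eab : (-1:ℂ)^((a:ℕ)+(b:ℕ)+1) = 1 := by rw [negpow, if_pos (by omega)]
      have eac : (-1:ℂ)^((a:ℕ)+(c:ℕ)+1) = (-1) := by rw [negpow, if_neg (by omega)]
      have ebc : (-1:ℂ)^((b:ℕ)+(c:ℕ)+1) = 1 := by rw [negpow, if_pos (by omega)]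
      have eb1 : (-1:ℂ)^((b:ℕ)+1) = (-1) := by rw [negpow, if_neg (by omega)]
      have ec1 : (-1:ℂ)^((c:ℕ)+1) = 1 := by rw [negpow, if_pos (by omega)]
      simp only [eab, eac, ebc, eb1, ec1]
      split_ifs <;> first | (exfalso; omega) | (field_simp; ring)
    · -- parity (1,1,0)
      have eab : (-1:ℂ)^((a:ℕ)+(b:ℕ)+1) = (-1) := by rw [negpow, if_neg (by omega)]
      have eac : (-1:ℂ)^((a:ℕ)+(c:ℕ)+1) = 1 := by rw [negpow, if_pos (by omega)]
      have ebc : (-1:ℂ)^((b:ℕ)+(c:ℕ)+1) = 1 := by rw [negpow, if_pos (by omega)]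
      have eb1 : (-1:ℂ)^((b:ℕ)+1) = 1 := by rw [negpow, if_pos (by omega)]
      have ec1 : (-1:ℂ)^((c:ℕ)+1) = (-1) := by rw [negpow, if_neg (by omega)]
      simp only [eab, eac, ebc, eb1, ec1]
      split_ifs <;> first | (exfalso; omega) | (field_simp; ring)
    · -- parity (1,1,1)
      have eab : (-1:ℂ)^((a:ℕ)+(b:ℕ)+1) = (-1) := by rw [negpow, if_neg (by omega)]
      have eac : (-1:ℂ)^((a:ℕ)+(c:ℕ)+1) = (-1) := by rw [negpow, if_neg (by omega)]
      have ebc : (-1:ℂ)^((b:ℕ)+(c:ℕ)+1) = (-1) := by rw [negpow, if_neg (by omega)]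
      have eb1 : (-1:ℂ)^((b:ℕ)+1) = 1 := by rw [negpow, if_pos (by omega)]
      have ec1 : (-1:ℂ)^((c:ℕ)+1) = 1 := by rw [negpow, if_pos (by omega)]
      simp only [eab, eac, ebc, eb1, ec1]
      split_ifs <;> first | (exfalso; omega) | (field_simp; ring)
  · rw [CC_diag (a := c) (b := (⟨2*K+2, by omega⟩ : Fin (2*K+3)))
        (show (c:ℕ) = ((⟨2*K+2, by omega⟩ : Fin (2*K+3)):ℕ) from by simp; omega) s lam]
    simp only [CCu, Fin.val_mk, coordFn_last_apply, negpow_shift]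
    simp only [
        eq_false (show ¬((a:ℕ)+1 = (c:ℕ) ∧ (c:ℕ) < 2*K+2) from by omega),
        eq_false (show ¬((b:ℕ) = 0 ∧ (c:ℕ) = 2*K+1) from by omega),
        eq_false (show ¬((b:ℕ)+1 = 2*K+2 ∧ 2*K+2 < 2*K+2) from by omega),
        eq_false (show ¬((b:ℕ) = 0 ∧ 2*K+2 = 2*K+1) from by omega),
        eq_false (show ¬((a:ℕ) = 0 ∧ (c:ℕ) = 2*K+1) from by omega),
        eq_false (show ¬((b:ℕ)+1 = (c:ℕ) ∧ (c:ℕ) < 2*K+2) from by omega),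
        if_false]
    rcases Nat.mod_two_eq_zero_or_one (a:ℕ) with ha | ha <;>
      rcases Nat.mod_two_eq_zero_or_one (b:ℕ) with hb | hb <;>
      rcases Nat.mod_two_eq_zero_or_one (c:ℕ) with hc | hc
    · -- parity (0,0,0)
      have eab : (-1:ℂ)^((a:ℕ)+(b:ℕ)+1) = (-1) := by rw [negpow, if_neg (by omega)]
      have eac : (-1:ℂ)^((a:ℕ)+(c:ℕ)+1) = (-1) := by rw [negpow, if_neg (by omega)]
      have ebc : (-1:ℂ)^((b:ℕ)+(c:ℕ)+1) = (-1) := by rw [negpow, if_neg (by omega)]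
      have eb1 : (-1:ℂ)^((b:ℕ)+1) = (-1) := by rw [negpow, if_neg (by omega)]
      have ec1 : (-1:ℂ)^((c:ℕ)+1) = (-1) := by rw [negpow, if_neg (by omega)]
      simp only [eab, eac, ebc, eb1, ec1]
      split_ifs <;> first | (exfalso; omega) | (field_simp; ring)
    · -- parity (0,0,1)
      have eab : (-1:ℂ)^((a:ℕ)+(b:ℕ)+1) = (-1) := by rw [negpow, if_neg (by omega)]
      have eac : (-1:ℂ)^((a:ℕ)+(c:ℕ)+1) = 1 := by rw [negpow, if_pos (by omega)]
      have ebc : (-1:ℂ)^((b:ℕ)+(c:ℕ)+1) = 1 := by rw [negpow, if_pos (by omega)]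
      have eb1 : (-1:ℂ)^((b:ℕ)+1) = (-1) := by rw [negpow, if_neg (by omega)]
      have ec1 : (-1:ℂ)^((c:ℕ)+1) = 1 := by rw [negpow, if_pos (by omega)]
      simp only [eab, eac, ebc, eb1, ec1]
      split_ifs <;> first | (exfalso; omega) | (field_simp; ring)
    · -- parity (0,1,0)
      have eab : (-1:ℂ)^((a:ℕ)+(b:ℕ)+1) = 1 := by rw [negpow, if_pos (by omega)]
      have eac : (-1:ℂ)^((a:ℕ)+(c:ℕ)+1) = (-1) := by rw [negpow, if_neg (by omega)]
      have ebc : (-1:ℂ)^((b:ℕ)+(c:ℕ)+1) = 1 := by rw [negpow, if_pos (by omega)]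
      have eb1 : (-1:ℂ)^((b:ℕ)+1) = 1 := by rw [negpow, if_pos (by omega)]
      have ec1 : (-1:ℂ)^((c:ℕ)+1) = (-1) := by rw [negpow, if_neg (by omega)]
      simp only [eab, eac, ebc, eb1, ec1]
      split_ifs <;> first | (exfalso; omega) | (field_simp; ring)
    · -- parity (0,1,1)
      have eab : (-1:ℂ)^((a:ℕ)+(b:ℕ)+1) = 1 := by rw [negpow, if_pos (by omega)]
      have eac : (-1:ℂ)^((a:ℕ)+(c:ℕ)+1) = 1 := by rw [negpow, if_pos (by omega)]
      have ebc : (-1:ℂ)^((b:ℕ)+(c:ℕ)+1) = (-1) := by rw [negpow, if_neg (by omega)]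
      have eb1 : (-1:ℂ)^((b:ℕ)+1) = 1 := by rw [negpow, if_pos (by omega)]
      have ec1 : (-1:ℂ)^((c:ℕ)+1) = 1 := by rw [negpow, if_pos (by omega)]
      simp only [eab, eac, ebc, eb1, ec1]
      split_ifs <;> first | (exfalso; omega) | (field_simp; ring)
    · -- parity (1,0,0)
      have eab : (-1:ℂ)^((a:ℕ)+(b:ℕ)+1) = 1 := by rw [negpow, if_pos (by omega)]
      have eac : (-1:ℂ)^((a:ℕ)+(c:ℕ)+1) = 1 := by rw [negpow, if_pos (by omega)]
      have ebc : (-1:ℂ)^((b:ℕ)+(c:ℕ)+1) = (-1) := by rw [negpow, if_neg (by omega)]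
      have eb1 : (-1:ℂ)^((b:ℕ)+1) = (-1) := by rw [negpow, if_neg (by omega)]
      have ec1 : (-1:ℂ)^((c:ℕ)+1) = (-1) := by rw [negpow, if_neg (by omega)]
      simp only [eab, eac, ebc, eb1, ec1]
      split_ifs <;> first | (exfalso; omega) | (field_simp; ring)
    · -- parity (1,0,1)
      have eab : (-1:ℂ)^((a:ℕ)+(b:ℕ)+1) = 1 := by rw [negpow, if_pos (by omega)]
      have eac : (-1:ℂ)^((a:ℕ)+(c:ℕ)+1) = (-1) := by rw [negpow, if_neg (by omega)]
      have ebc : (-1:ℂ)^((b:ℕ)+(c:ℕ)+1) = 1 := by rw [negpow, if_pos (by omega)]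
      have eb1 : (-1:ℂ)^((b:ℕ)+1) = (-1) := by rw [negpow, if_neg (by omega)]
      have ec1 : (-1:ℂ)^((c:ℕ)+1) = 1 := by rw [negpow, if_pos (by omega)]
      simp only [eab, eac, ebc, eb1, ec1]
      split_ifs <;> first | (exfalso; omega) | (field_simp; ring)
    · -- parity (1,1,0)
      have eab : (-1:ℂ)^((a:ℕ)+(b:ℕ)+1) = (-1) := by rw [negpow, if_neg (by omega)]
      have eac : (-1:ℂ)^((a:ℕ)+(c:ℕ)+1) = 1 := by rw [negpow, if_pos (by omega)]
      have ebc : (-1:ℂ)^((b:ℕ)+(c:ℕ)+1) = 1 := by rw [negpow, if_pos (by omega)]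
      have eb1 : (-1:ℂ)^((b:ℕ)+1) = 1 := by rw [negpow, if_pos (by omega)]
      have ec1 : (-1:ℂ)^((c:ℕ)+1) = (-1) := by rw [negpow, if_neg (by omega)]
      simp only [eab, eac, ebc, eb1, ec1]
      split_ifs <;> first | (exfalso; omega) | (field_simp; ring)
    · -- parity (1,1,1)
      have eab : (-1:ℂ)^((a:ℕ)+(b:ℕ)+1) = (-1) := by rw [negpow, if_neg (by omega)]
      have eac : (-1:ℂ)^((a:ℕ)+(c:ℕ)+1) = (-1) := by rw [negpow, if_neg (by omega)]
      have ebc : (-1:ℂ)^((b:ℕ)+(c:ℕ)+1) = (-1) := by rw [negpow, if_neg (by omega)]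
      have eb1 : (-1:ℂ)^((b:ℕ)+1) = 1 := by rw [negpow, if_pos (by omega)]
      have ec1 : (-1:ℂ)^((c:ℕ)+1) = 1 := by rw [negpow, if_pos (by omega)]
      simp only [eab, eac, ebc, eb1, ec1]
      split_ifs <;> first | (exfalso; omega) | (field_simp; ring)

lemma CC_fun_pos {a b : Fin (2*K+3)} (h : (a:ℕ) < (b:ℕ)) : CC K a b = CCu K a b := by
  funext s lam
  exact CC_pos h s lam

lemma CC_fun_neg {a b : Fin (2*K+3)} (h : (b:ℕ) < (a:ℕ)) :
    CC K a b = fun s lam => -(CCu K b a s lam) := by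
  funext s lam
  exact CC_neg h s lam

lemma CC_fun_diag {a b : Fin (2*K+3)} (h : (a:ℕ) = (b:ℕ)) :
    CC K a b = fun _ _ => (0:ℂ) := by
  funext s lam
  exact CC_diag h s lam

lemma CC_fun_anti (a b : Fin (2*K+3)) : CC K b a = fun s lam => -(CC K a b s lam) := by
  funext s lam
  rcases Nat.lt_trichotomy (a:ℕ) (b:ℕ) with h | h | h
  · rw [CC_neg h, CC_pos h]
  · rw [CC_diag h.symm, CC_diag h]
    ring
  · rw [CC_pos h, CC_neg h]
    ring

end FNAux

theorem flaschka_newell_jacobi' (K : ℕ) (a b c : Fin (2*K+3))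
    (s : Fin (2*K+2) → ℂ) (lam : ℂ) (hlam : lam ≠ 0) :
    fnBr K (coordFn K a) (fnBr K (coordFn K b) (coordFn K c)) s lam
    + fnBr K (coordFn K b) (fnBr K (coordFn K c) (coordFn K a)) s lam
    + fnBr K (coordFn K c) (fnBr K (coordFn K a) (coordFn K b)) s lam = 0 := by
  rw [fnBr_coord_coord b c, fnBr_coord_coord c a, fnBr_coord_coord a b]
  rcases eq_or_ne a b with rfl | hab
  · rw [CC_fun_anti a c, fnBr_neg_right, CC_fun_diag rfl, fnBr_zero_right]
    ring
  rcases eq_or_ne b c with rfl | hbc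
  · rw [CC_fun_anti a b, fnBr_neg_right, CC_fun_diag rfl, fnBr_zero_right]
    ring
  rcases eq_or_ne a c with rfl | hac
  · rw [CC_fun_anti a b, fnBr_neg_right, CC_fun_diag rfl, fnBr_zero_right]
    ring
  have hab' : (a:ℕ) ≠ (b:ℕ) := fun h => hab (Fin.ext h)
  have hbc' : (b:ℕ) ≠ (c:ℕ) := fun h => hbc (Fin.ext h)
  have hac' : (a:ℕ) ≠ (c:ℕ) := fun h => hac (Fin.ext h)
  rcases Nat.lt_trichotomy (a:ℕ) (b:ℕ) with h1 | h1 | h1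
  · rcases Nat.lt_trichotomy (b:ℕ) (c:ℕ) with h2 | h2 | h2
    · -- a < b < c
      rw [CC_fun_pos h2, CC_fun_neg (show (a:ℕ) < (c:ℕ) from by omega), fnBr_neg_right,
          CC_fun_pos h1]
      linear_combination key a b c h1 h2 s hlam
    · exact absurd h2 hbc'
    · rcases Nat.lt_trichotomy (a:ℕ) (c:ℕ) with h3 | h3 | h3
      · -- a < c < b
        rw [CC_fun_neg h2, fnBr_neg_right, CC_fun_neg h3, fnBr_neg_right, CC_fun_pos h1]
        linear_combination -(key a c b h3 h2 s hlam)
      · exact absurd h3 hac'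
      · -- c < a < b
        rw [CC_fun_neg h2, fnBr_neg_right, CC_fun_pos h3, CC_fun_pos h1]
        linear_combination key c a b h3 h1 s hlam
  · exact absurd h1 hab'
  · rcases Nat.lt_trichotomy (a:ℕ) (c:ℕ) with h3 | h3 | h3
    · -- b < a < c
      rw [CC_fun_pos (show (b:ℕ) < (c:ℕ) from by omega), CC_fun_neg h3, fnBr_neg_right,
          CC_fun_neg h1, fnBr_neg_right]
      linear_combination -(key b a c h1 h3 s hlam)
    · exact absurd h3 hac'
    · rcases Nat.lt_trichotomy (b:ℕ) (c:ℕ) with h2 | h2 | h2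
      · -- b < c < a
        rw [CC_fun_pos h2, CC_fun_pos h3, CC_fun_neg h1, fnBr_neg_right]
        linear_combination key b c a h2 h3 s hlam
      · exact absurd h2 hbc'
      · -- c < b < a
        rw [CC_fun_neg h2, fnBr_neg_right, CC_fun_pos h3, CC_fun_neg h1, fnBr_neg_right]
        linear_combination -(key c b a h2 h1 s hlam)

/-- the Flaschka–Newell bracket satisfies the Jacobi identity on all
coordinate functions `x_a, x_b, x_c` taken among `s_1, …, s_{2K+2}, λ`,
identically on `ℂ^{2K+2} × ℂ*`. -/
theorem flaschka_newell_jacobi (K : ℕ) (hK : 1 ≤ K) (a b c : Fin (2*K+3))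
    (s : Fin (2*K+2) → ℂ) (lam : ℂ) (hlam : lam ≠ 0) :
    fnBr K (coordFn K a) (fnBr K (coordFn K b) (coordFn K c)) s lam
    + fnBr K (coordFn K b) (fnBr K (coordFn K c) (coordFn K a)) s lam
    + fnBr K (coordFn K c) (fnBr K (coordFn K a) (coordFn K b)) s lam = 0 := by
  exact flaschka_newell_jacobi' K a b c s lam hlam
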